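/- Let ψ, B : ℝ³ → ℝ be smooth (C^∞) functions of (t, x, y), 1-periodic in x and in y, let θ ∈ ℝ, and set ω := −Δψ and B̃ := B + θ{ψ, B}. Suppose the modified equations for 2D incompressible MHD with magnetic field normal to the plane (Casimir C = ½∫B², K = Id) hold at every point: ∂_t ω + {ω, ψ} + {B̃, B} = 0 and ∂_t B + {B̃, ψ} = 0. Then for every t ∈ ℝ, the magnetic energy decays as: the function t ↦ ½ ∫_{[0,1]²} B(t, x, y)² dx dy is differentiable with derivative − θ ∫_{[0,1]²} {ψ, B}(t, x, y)² dx dy. -/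

import Mathlib

open MeasureTheory

/-- Partial derivative in the time variable `t` of a function of `(t, x, y)`. -/
noncomputable def pdt (f : ℝ × ℝ × ℝ → ℝ) (p : ℝ × ℝ × ℝ) : ℝ :=
  deriv (fun s => f (s, p.2.1, p.2.2)) p.1

/-- Partial derivative in the first spatial variable `x`. -/
noncomputable def pdx (f : ℝ × ℝ × ℝ → ℝ) (p : ℝ × ℝ × ℝ) : ℝ :=
  deriv (fun s => f (p.1, s, p.2.2)) p.2.1

/-- Partial derivative in the second spatial variable `y`. -/
noncomputable def pdy (f : ℝ × ℝ × ℝ → ℝ) (p : ℝ × ℝ × ℝ) : ℝ :=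
  deriv (fun s => f (p.1, p.2.1, s)) p.2.2

/-- The canonical (Jacobian) bracket `{f, g} = ∂ₓf ∂_y g − ∂_y f ∂ₓ g` in the spatial
variables. -/
noncomputable def jacBracket (f g : ℝ × ℝ × ℝ → ℝ) (p : ℝ × ℝ × ℝ) : ℝ :=
  pdx f p * pdy g p - pdy f p * pdx g p

/-- The spatial Laplacian `Δ = ∂ₓ² + ∂_y²`. -/
noncomputable def spatialLap (f : ℝ × ℝ × ℝ → ℝ) (p : ℝ × ℝ × ℝ) : ℝ :=
  pdx (pdx f) p + pdy (pdy f) p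

section Aux

variable {f g : ℝ × ℝ × ℝ → ℝ}

private lemma one_le_inf : ((⊤ : ℕ∞) : WithTop ℕ∞) ≠ 0 := by simp
private lemma inf_add_one : ((⊤ : ℕ∞) : WithTop ℕ∞) + 1 ≤ ((⊤ : ℕ∞) : WithTop ℕ∞) := by
  exact_mod_cast le_top

lemma slice_t (hf : ContDiff ℝ (⊤ : ℕ∞) f) (p : ℝ × ℝ × ℝ) :
    HasDerivAt (fun s => f (s, p.2.1, p.2.2)) (fderiv ℝ f p ((1, 0, 0) : ℝ × ℝ × ℝ)) p.1 := by
  have h : HasDerivAt (fun s : ℝ => ((s, p.2.1, p.2.2) : ℝ × ℝ × ℝ))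
      ((1, 0, 0) : ℝ × ℝ × ℝ) p.1 :=
    (hasDerivAt_id _).prodMk ((hasDerivAt_const _ _).prodMk (hasDerivAt_const _ _))
  exact (hf.differentiable one_le_inf p).hasFDerivAt.comp_hasDerivAt p.1 h

lemma slice_x (hf : ContDiff ℝ (⊤ : ℕ∞) f) (p : ℝ × ℝ × ℝ) :
    HasDerivAt (fun s => f (p.1, s, p.2.2)) (fderiv ℝ f p ((0, 1, 0) : ℝ × ℝ × ℝ)) p.2.1 := by
  have h : HasDerivAt (fun s : ℝ => ((p.1, s, p.2.2) : ℝ × ℝ × ℝ))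
      ((0, 1, 0) : ℝ × ℝ × ℝ) p.2.1 :=
    (hasDerivAt_const _ _).prodMk ((hasDerivAt_id _).prodMk (hasDerivAt_const _ _))
  exact (hf.differentiable one_le_inf p).hasFDerivAt.comp_hasDerivAt p.2.1 h

lemma slice_y (hf : ContDiff ℝ (⊤ : ℕ∞) f) (p : ℝ × ℝ × ℝ) :
    HasDerivAt (fun s => f (p.1, p.2.1, s)) (fderiv ℝ f p ((0, 0, 1) : ℝ × ℝ × ℝ)) p.2.2 := by
  have h : HasDerivAt (fun s : ℝ => ((p.1, p.2.1, s) : ℝ × ℝ × ℝ))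
      ((0, 0, 1) : ℝ × ℝ × ℝ) p.2.2 :=
    (hasDerivAt_const _ _).prodMk ((hasDerivAt_const _ _).prodMk (hasDerivAt_id _))
  exact (hf.differentiable one_le_inf p).hasFDerivAt.comp_hasDerivAt p.2.2 h

lemma pdt_eq (hf : ContDiff ℝ (⊤ : ℕ∞) f) (p : ℝ × ℝ × ℝ) :
    pdt f p = fderiv ℝ f p ((1, 0, 0) : ℝ × ℝ × ℝ) := (slice_t hf p).deriv

lemma pdx_eq (hf : ContDiff ℝ (⊤ : ℕ∞) f) (p : ℝ × ℝ × ℝ) :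
    pdx f p = fderiv ℝ f p ((0, 1, 0) : ℝ × ℝ × ℝ) := (slice_x hf p).deriv

lemma pdy_eq (hf : ContDiff ℝ (⊤ : ℕ∞) f) (p : ℝ × ℝ × ℝ) :
    pdy f p = fderiv ℝ f p ((0, 0, 1) : ℝ × ℝ × ℝ) := (slice_y hf p).deriv

lemma hasDerivAt_pdt (hf : ContDiff ℝ (⊤ : ℕ∞) f) (p : ℝ × ℝ × ℝ) :
    HasDerivAt (fun s => f (s, p.2.1, p.2.2)) (pdt f p) p.1 := by
  rw [pdt_eq hf]; exact slice_t hf p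

lemma hasDerivAt_pdx (hf : ContDiff ℝ (⊤ : ℕ∞) f) (p : ℝ × ℝ × ℝ) :
    HasDerivAt (fun s => f (p.1, s, p.2.2)) (pdx f p) p.2.1 := by
  rw [pdx_eq hf]; exact slice_x hf p

lemma hasDerivAt_pdy (hf : ContDiff ℝ (⊤ : ℕ∞) f) (p : ℝ × ℝ × ℝ) :
    HasDerivAt (fun s => f (p.1, p.2.1, s)) (pdy f p) p.2.2 := by
  rw [pdy_eq hf]; exact slice_y hf p

lemma contDiff_pdt (hf : ContDiff ℝ (⊤ : ℕ∞) f) : ContDiff ℝ (⊤ : ℕ∞) (pdt f) := by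
  have : pdt f = fun p => fderiv ℝ f p ((1, 0, 0) : ℝ × ℝ × ℝ) := funext fun p => pdt_eq hf p
  rw [this]; exact (hf.fderiv_right inf_add_one).clm_apply contDiff_const

lemma contDiff_pdx (hf : ContDiff ℝ (⊤ : ℕ∞) f) : ContDiff ℝ (⊤ : ℕ∞) (pdx f) := by
  have : pdx f = fun p => fderiv ℝ f p ((0, 1, 0) : ℝ × ℝ × ℝ) := funext fun p => pdx_eq hf p
  rw [this]; exact (hf.fderiv_right inf_add_one).clm_apply contDiff_const

lemma contDiff_pdy (hf : ContDiff ℝ (⊤ : ℕ∞) f) : ContDiff ℝ (⊤ : ℕ∞) (pdy f) := by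
  have : pdy f = fun p => fderiv ℝ f p ((0, 0, 1) : ℝ × ℝ × ℝ) := funext fun p => pdy_eq hf p
  rw [this]; exact (hf.fderiv_right inf_add_one).clm_apply contDiff_const

lemma pdx_mul (hf : ContDiff ℝ (⊤ : ℕ∞) f) (hg : ContDiff ℝ (⊤ : ℕ∞) g) (p : ℝ × ℝ × ℝ) :
    pdx (fun q => f q * g q) p = pdx f p * g p + f p * pdx g p :=
  ((hasDerivAt_pdx hf p).mul (hasDerivAt_pdx hg p)).deriv

lemma pdy_mul (hf : ContDiff ℝ (⊤ : ℕ∞) f) (hg : ContDiff ℝ (⊤ : ℕ∞) g) (p : ℝ × ℝ × ℝ) :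
    pdy (fun q => f q * g q) p = pdy f p * g p + f p * pdy g p :=
  ((hasDerivAt_pdy hf p).mul (hasDerivAt_pdy hg p)).deriv

lemma pdx_add_const_mul (hf : ContDiff ℝ (⊤ : ℕ∞) f) (hg : ContDiff ℝ (⊤ : ℕ∞) g) (c : ℝ)
    (p : ℝ × ℝ × ℝ) : pdx (fun q => f q + c * g q) p = pdx f p + c * pdx g p :=
  ((hasDerivAt_pdx hf p).add ((hasDerivAt_pdx hg p).const_mul c)).deriv

lemma pdy_add_const_mul (hf : ContDiff ℝ (⊤ : ℕ∞) f) (hg : ContDiff ℝ (⊤ : ℕ∞) g) (c : ℝ)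
    (p : ℝ × ℝ × ℝ) : pdy (fun q => f q + c * g q) p = pdy f p + c * pdy g p :=
  ((hasDerivAt_pdy hf p).add ((hasDerivAt_pdy hg p).const_mul c)).deriv

lemma pdx_pdy_comm (hf : ContDiff ℝ (⊤ : ℕ∞) f) (p : ℝ × ℝ × ℝ) :
    pdx (pdy f) p = pdy (pdx f) p := by
  have hdf : ContDiff ℝ (⊤ : ℕ∞) (fderiv ℝ f) := hf.fderiv_right inf_add_one
  have h1 : pdy f = fun q => fderiv ℝ f q ((0, 0, 1) : ℝ × ℝ × ℝ) := funext fun q => pdy_eq hf q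
  have h2 : pdx f = fun q => fderiv ℝ f q ((0, 1, 0) : ℝ × ℝ × ℝ) := funext fun q => pdx_eq hf q
  have key : ∀ v w : ℝ × ℝ × ℝ,
      fderiv ℝ (fun q => fderiv ℝ f q w) p v = fderiv ℝ (fderiv ℝ f) p v w := by
    intro v w
    have : fderiv ℝ (fun q => fderiv ℝ f q w) p
        = ((fderiv ℝ (fderiv ℝ f) p).flip) w := by
      have := fderiv_clm_apply (c := fderiv ℝ f) (u := fun _ => w)
        (hdf.differentiable one_le_inf p) (differentiableAt_const w)
      simpa using this
    rw [this]; rfl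
  have sym : fderiv ℝ (fderiv ℝ f) p ((0,1,0) : ℝ×ℝ×ℝ) ((0,0,1) : ℝ×ℝ×ℝ)
      = fderiv ℝ (fderiv ℝ f) p ((0,0,1) : ℝ×ℝ×ℝ) ((0,1,0) : ℝ×ℝ×ℝ) :=
    second_derivative_symmetric (fun y => (hf.differentiable one_le_inf y).hasFDerivAt)
      ((hdf.differentiable one_le_inf p).hasFDerivAt) _ _
  rw [h1, h2, pdx_eq (hdf.clm_apply contDiff_const) p, pdy_eq (hdf.clm_apply contDiff_const) p,
    key, key, sym]


private lemma periodic_deriv_eq {g : ℝ → ℝ} (h : ∀ s, g (s + 1) = g s) (x : ℝ) :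
    deriv g (x + 1) = deriv g x := by
  rw [← deriv_comp_add_const g 1 x]
  exact congrFun (congrArg deriv (funext h)) x

lemma perx_pdx (h : ∀ t x y : ℝ, f (t, x + 1, y) = f (t, x, y)) (t x y : ℝ) :
    pdx f (t, x + 1, y) = pdx f (t, x, y) :=
  periodic_deriv_eq (fun s => h t s y) x

lemma pery_pdx (h : ∀ t x y : ℝ, f (t, x, y + 1) = f (t, x, y)) (t x y : ℝ) :
    pdx f (t, x, y + 1) = pdx f (t, x, y) := by
  show deriv (fun s => f (t, s, y + 1)) x = deriv (fun s => f (t, s, y)) x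
  rw [funext fun s => h t s y]

lemma pery_pdy (h : ∀ t x y : ℝ, f (t, x, y + 1) = f (t, x, y)) (t x y : ℝ) :
    pdy f (t, x, y + 1) = pdy f (t, x, y) :=
  periodic_deriv_eq (fun s => h t x s) y

lemma perx_pdy (h : ∀ t x y : ℝ, f (t, x + 1, y) = f (t, x, y)) (t x y : ℝ) :
    pdy f (t, x + 1, y) = pdy f (t, x, y) := by
  show deriv (fun s => f (t, x + 1, s)) y = deriv (fun s => f (t, x, s)) y
  rw [show (fun s => f (t, x + 1, s)) = fun s => f (t, x, s) from funext fun s => h t (x) s ▸ rfl]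


local notation "I01" => Set.Icc (0:ℝ) 1

lemma measure_decomp :
    (volume : Measure (ℝ × ℝ)).restrict (I01 ×ˢ I01)
      = (volume.restrict I01).prod (volume.restrict I01) := by
  rw [Measure.volume_eq_prod, ← Measure.prod_restrict]

lemma integrableOn_sq {F : ℝ × ℝ × ℝ → ℝ} (hF : Continuous F) (t : ℝ) :
    IntegrableOn (fun q : ℝ × ℝ => F (t, q.1, q.2)) (I01 ×ˢ I01) volume := by
  have hc : Continuous fun q : ℝ × ℝ => F (t, q.1, q.2) :=
    hF.comp (continuous_const.prodMk (continuous_fst.prodMk continuous_snd))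
  exact hc.continuousOn.integrableOn_compact (isCompact_Icc.prod isCompact_Icc)

lemma integral_pdx_zero (hf : ContDiff ℝ (⊤ : ℕ∞) f)
    (hfx : ∀ t x y : ℝ, f (t, x + 1, y) = f (t, x, y)) (t : ℝ) :
    ∫ q in I01 ×ˢ I01, pdx f (t, q.1, q.2) = 0 := by
  have hint : Integrable (fun q : ℝ × ℝ => pdx f (t, q.1, q.2))
      ((volume.restrict I01).prod (volume.restrict I01)) := by
    rw [← measure_decomp]; exact integrableOn_sq (contDiff_pdx hf).continuous t
  rw [show (∫ q in I01 ×ˢ I01, pdx f (t, q.1, q.2))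
      = ∫ q, pdx f (t, q.1, q.2) ∂((volume.restrict I01).prod (volume.restrict I01)) from by
    rw [← measure_decomp],
    MeasureTheory.integral_prod_symm _ hint]
  have inner : ∀ y : ℝ, (∫ x in I01, pdx f (t, x, y)) = 0 := by
    intro y
    have h1 : (∫ x in I01, pdx f (t, x, y)) = ∫ x in (0:ℝ)..1, pdx f (t, x, y) := by
      rw [MeasureTheory.integral_Icc_eq_integral_Ioc,
        ← intervalIntegral.integral_of_le (zero_le_one)]
    rw [h1, intervalIntegral.integral_eq_sub_of_hasDerivAt
      (f := fun x => f (t, x, y)) (fun x _ => hasDerivAt_pdx hf (t, x, y))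
      (((contDiff_pdx hf).continuous.comp
        (continuous_const.prodMk (continuous_id.prodMk continuous_const))).intervalIntegrable 0 1)]
    have := hfx t 0 y
    norm_num at this
    rw [this, sub_self]
  simp only [inner, integral_zero]

lemma integral_pdy_zero (hf : ContDiff ℝ (⊤ : ℕ∞) f)
    (hfy : ∀ t x y : ℝ, f (t, x, y + 1) = f (t, x, y)) (t : ℝ) :
    ∫ q in I01 ×ˢ I01, pdy f (t, q.1, q.2) = 0 := by
  have hint : Integrable (fun q : ℝ × ℝ => pdy f (t, q.1, q.2))
      ((volume.restrict I01).prod (volume.restrict I01)) := by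
    rw [← measure_decomp]; exact integrableOn_sq (contDiff_pdy hf).continuous t
  rw [show (∫ q in I01 ×ˢ I01, pdy f (t, q.1, q.2))
      = ∫ q, pdy f (t, q.1, q.2) ∂((volume.restrict I01).prod (volume.restrict I01)) from by
    rw [← measure_decomp],
    MeasureTheory.integral_prod _ hint]
  have inner : ∀ x : ℝ, (∫ y in I01, pdy f (t, x, y)) = 0 := by
    intro x
    have h1 : (∫ y in I01, pdy f (t, x, y)) = ∫ y in (0:ℝ)..1, pdy f (t, x, y) := by
      rw [MeasureTheory.integral_Icc_eq_integral_Ioc,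
        ← intervalIntegral.integral_of_le (zero_le_one)]
    rw [h1, intervalIntegral.integral_eq_sub_of_hasDerivAt
      (f := fun y => f (t, x, y)) (fun y _ => hasDerivAt_pdy hf (t, x, y))
      (((contDiff_pdy hf).continuous.comp
        (continuous_const.prodMk (continuous_const.prodMk continuous_id))).intervalIntegrable 0 1)]
    have := hfy t x 0
    norm_num at this
    rw [this, sub_self]
  simp only [inner, integral_zero]

lemma integral_jacBracket_zero {u v : ℝ × ℝ × ℝ → ℝ}
    (hu : ContDiff ℝ (⊤ : ℕ∞) u) (hv : ContDiff ℝ (⊤ : ℕ∞) v)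
    (hux : ∀ t x y : ℝ, u (t, x + 1, y) = u (t, x, y))
    (huy : ∀ t x y : ℝ, u (t, x, y + 1) = u (t, x, y))
    (hvx : ∀ t x y : ℝ, v (t, x + 1, y) = v (t, x, y))
    (hvy : ∀ t x y : ℝ, v (t, x, y + 1) = v (t, x, y)) (t : ℝ) :
    ∫ q in I01 ×ˢ I01, jacBracket u v (t, q.1, q.2) = 0 := by
  set P : ℝ × ℝ × ℝ → ℝ := fun p => u p * pdy v p with hP
  set R : ℝ × ℝ × ℝ → ℝ := fun p => u p * pdx v p with hR
  have hPc : ContDiff ℝ (⊤ : ℕ∞) P := hu.mul (contDiff_pdy hv)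
  have hRc : ContDiff ℝ (⊤ : ℕ∞) R := hu.mul (contDiff_pdx hv)
  have hPx : ∀ t x y : ℝ, P (t, x + 1, y) = P (t, x, y) := fun t x y => by
    simp only [hP, hux t x y, perx_pdy hvx t x y]
  have hRy : ∀ t x y : ℝ, R (t, x, y + 1) = R (t, x, y) := fun t x y => by
    simp only [hR, huy t x y, pery_pdx hvy t x y]
  have hpt : ∀ p : ℝ × ℝ × ℝ, jacBracket u v p = pdx P p - pdy R p := by
    intro p
    rw [hP, hR, pdx_mul hu (contDiff_pdy hv) p, pdy_mul hu (contDiff_pdx hv) p,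
      pdx_pdy_comm hv p]
    simp only [jacBracket]; ring
  calc ∫ q in I01 ×ˢ I01, jacBracket u v (t, q.1, q.2)
      = ∫ q in I01 ×ˢ I01, (pdx P (t, q.1, q.2) - pdy R (t, q.1, q.2)) := by
        simp only [hpt]
    _ = (∫ q in I01 ×ˢ I01, pdx P (t, q.1, q.2)) - ∫ q in I01 ×ˢ I01, pdy R (t, q.1, q.2) :=
        MeasureTheory.integral_sub (integrableOn_sq (contDiff_pdx hPc).continuous t)
          (integrableOn_sq (contDiff_pdy hRc).continuous t)
    _ = 0 := by rw [integral_pdx_zero hPc hPx t, integral_pdy_zero hRc hRy t, sub_self]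


lemma contDiff_jacBracket {u v : ℝ × ℝ × ℝ → ℝ} (hu : ContDiff ℝ (⊤ : ℕ∞) u)
    (hv : ContDiff ℝ (⊤ : ℕ∞) v) : ContDiff ℝ (⊤ : ℕ∞) (jacBracket u v) := by
  unfold jacBracket
  exact ((contDiff_pdx hu).mul (contDiff_pdy hv)).sub ((contDiff_pdy hu).mul (contDiff_pdx hv))

-- end Aux

/-- For smooth, spatially `1`-periodic solutions of the modified 2D
incompressible MHD equations with `𝐁 = B ẑ` normal to the plane and Casimir `½∫B²`
(K = Id): `∂ₜω + {ω, ψ} + {B̃, B} = 0`, `∂ₜB + {B̃, ψ} = 0`, where `ω = −Δψ` and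
`B̃ = B + θ{ψ, B}`, the magnetic energy decays at the rate
`d/dt (½∫B²) = −θ ∫ {ψ, B}²` (integrals over the unit square). -/
theorem statement18
    (ψ B : ℝ × ℝ × ℝ → ℝ) (θ : ℝ)
    (hψ : ContDiff ℝ (⊤ : ℕ∞) ψ) (hB : ContDiff ℝ (⊤ : ℕ∞) B)
    (hψx : ∀ t x y : ℝ, ψ (t, x + 1, y) = ψ (t, x, y))
    (hψy : ∀ t x y : ℝ, ψ (t, x, y + 1) = ψ (t, x, y))
    (hBx : ∀ t x y : ℝ, B (t, x + 1, y) = B (t, x, y))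
    (hBy : ∀ t x y : ℝ, B (t, x, y + 1) = B (t, x, y))
    (ω Btil : ℝ × ℝ × ℝ → ℝ)
    (hω : ω = fun p => -spatialLap ψ p)
    (hBtil : Btil = fun p => B p + θ * jacBracket ψ B p)
    (heq1 : ∀ p : ℝ × ℝ × ℝ, pdt ω p + jacBracket ω ψ p + jacBracket Btil B p = 0)
    (heq2 : ∀ p : ℝ × ℝ × ℝ, pdt B p + jacBracket Btil ψ p = 0) :
    ∀ t : ℝ,
      HasDerivAt
        (fun s => (1 / 2) *
          ∫ q in Set.Icc (0 : ℝ) 1 ×ˢ Set.Icc (0 : ℝ) 1, (B (s, q.1, q.2)) ^ 2)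
        (-(θ * ∫ q in Set.Icc (0 : ℝ) 1 ×ˢ Set.Icc (0 : ℝ) 1,
            (jacBracket ψ B (t, q.1, q.2)) ^ 2)) t := by
  intro t
  set c : ℝ × ℝ × ℝ → ℝ := jacBracket ψ B with hc
  have hcC : ContDiff ℝ (⊤ : ℕ∞) c := contDiff_jacBracket hψ hB
  have hcx : ∀ t x y : ℝ, c (t, x + 1, y) = c (t, x, y) := by
    intro t x y
    simp only [hc, jacBracket, perx_pdx hψx t x y, perx_pdx hBx t x y, perx_pdy hψx t x y,
      perx_pdy hBx t x y]
  have hcy : ∀ t x y : ℝ, c (t, x, y + 1) = c (t, x, y) := by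
    intro t x y
    simp only [hc, jacBracket, pery_pdx hψy t x y, pery_pdx hBy t x y, pery_pdy hψy t x y,
      pery_pdy hBy t x y]
  -- Step A: differentiation under the integral sign
  have hSm : MeasurableSet ((I01 ×ˢ I01 : Set (ℝ × ℝ))) := measurableSet_Icc.prod measurableSet_Icc
  have hSc : IsCompact ((I01 ×ˢ I01 : Set (ℝ × ℝ))) := isCompact_Icc.prod isCompact_Icc
  have hemb : Continuous fun q : ℝ × ℝ => ((t, q.1, q.2) : ℝ × ℝ × ℝ) :=
    continuous_const.prodMk (continuous_fst.prodMk continuous_snd)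
  have hGcont : Continuous fun z : ℝ × ℝ × ℝ => 2 * B z * pdt B z :=
    (continuous_const.mul hB.continuous).mul (contDiff_pdt hB).continuous
  obtain ⟨C, hC⟩ :=
    ((isCompact_Icc (a := t - 1) (b := t + 1)).prod hSc).exists_bound_of_continuousOn
      (f := fun z : ℝ × (ℝ × ℝ) => 2 * B (z.1, z.2.1, z.2.2) * pdt B (z.1, z.2.1, z.2.2))
      (hGcont.comp (continuous_fst.prodMk
        ((continuous_fst.comp continuous_snd).prodMk
          (continuous_snd.comp continuous_snd)))).continuousOn
  have HA := hasDerivAt_integral_of_dominated_loc_of_deriv_le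
    (μ := volume.restrict (I01 ×ˢ I01))
    (F := fun s (q : ℝ × ℝ) => (B (s, q.1, q.2)) ^ 2)
    (F' := fun s (q : ℝ × ℝ) => 2 * B (s, q.1, q.2) * pdt B (s, q.1, q.2))
    (x₀ := t) (bound := fun _ => C) (s := Metric.ball t 1) (Metric.ball_mem_nhds t one_pos)
    (Filter.Eventually.of_forall fun s =>
      (Continuous.aestronglyMeasurable (by
        exact (hB.continuous.comp
          (continuous_const.prodMk (continuous_fst.prodMk continuous_snd))).pow 2)))
    (((hB.continuous.comp hemb).pow 2).continuousOn.integrableOn_compact hSc)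
    ((hGcont.comp hemb).aestronglyMeasurable)
    (by
      refine Filter.eventually_of_mem (self_mem_ae_restrict hSm) fun q hq s hs => ?_
      have hd := Metric.mem_ball.1 hs
      rw [Real.dist_eq] at hd
      have h1 := (abs_le.1 hd.le).1
      have h2 := (abs_le.1 hd.le).2
      exact hC (s, q) ⟨by simp only [Set.mem_Icc]; constructor <;> linarith, hq⟩)
    (integrableOn_const hSc.measure_lt_top.ne)
    (Filter.Eventually.of_forall fun q s _ => by
      simpa using (hasDerivAt_pdt hB (s, q.1, q.2)).fun_pow 2)
  have H := HA.2
  -- Step B: compute the derivative value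
  have hBtilx : ∀ p, pdx Btil p = pdx B p + θ * pdx c p := by
    intro p; rw [hBtil]; exact pdx_add_const_mul hB hcC θ p
  have hBtily : ∀ p, pdy Btil p = pdy B p + θ * pdy c p := by
    intro p; rw [hBtil]; exact pdy_add_const_mul hB hcC θ p
  have hpt : ∀ p : ℝ × ℝ × ℝ, 2 * B p * pdt B p =
      -(jacBracket (fun q => B q * B q) ψ p) - 2 * θ * jacBracket (fun q => B q * c q) ψ p
        - 2 * θ * (c p) ^ 2 := by
    intro p
    have h2 : pdt B p = -(jacBracket Btil ψ p) := by have := heq2 p; linarith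
    have hcp : c p = pdx ψ p * pdy B p - pdy ψ p * pdx B p := rfl
    rw [h2]
    simp only [jacBracket, hBtilx p, hBtily p, pdx_mul hB hB p, pdy_mul hB hB p,
      pdx_mul hB hcC p, pdy_mul hB hcC p, hcp]
    ring
  have hBB : ContDiff ℝ (⊤ : ℕ∞) (fun q => B q * B q) := hB.mul hB
  have hBc : ContDiff ℝ (⊤ : ℕ∞) (fun q => B q * c q) := hB.mul hcC
  have j1 : ∫ q in I01 ×ˢ I01, jacBracket (fun q => B q * B q) ψ (t, q.1, q.2) = 0 :=
    integral_jacBracket_zero hBB hψ (fun t x y => by simp only [hBx t x y])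
      (fun t x y => by simp only [hBy t x y]) hψx hψy t
  have j2 : ∫ q in I01 ×ˢ I01, jacBracket (fun q => B q * c q) ψ (t, q.1, q.2) = 0 :=
    integral_jacBracket_zero hBc hψ (fun t x y => by simp only [hBx t x y, hcx t x y])
      (fun t x y => by simp only [hBy t x y, hcy t x y]) hψx hψy t
  have i1 : IntegrableOn (fun q : ℝ × ℝ =>
      -(jacBracket (fun q => B q * B q) ψ (t, q.1, q.2))) (I01 ×ˢ I01) volume :=
    integrableOn_sq (F := fun p => -(jacBracket (fun q => B q * B q) ψ p))
      (contDiff_jacBracket hBB hψ).continuous.neg t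
  have i2 : IntegrableOn (fun q : ℝ × ℝ =>
      2 * θ * jacBracket (fun q => B q * c q) ψ (t, q.1, q.2)) (I01 ×ˢ I01) volume :=
    integrableOn_sq (F := fun p => 2 * θ * jacBracket (fun q => B q * c q) ψ p)
      (continuous_const.mul (contDiff_jacBracket hBc hψ).continuous) t
  have i3 : IntegrableOn (fun q : ℝ × ℝ => 2 * θ * (c (t, q.1, q.2)) ^ 2) (I01 ×ˢ I01) volume :=
    integrableOn_sq (F := fun p => 2 * θ * (c p) ^ 2)
      (continuous_const.mul (hcC.continuous.pow 2)) t
  have hval : (∫ q in I01 ×ˢ I01, 2 * B (t, q.1, q.2) * pdt B (t, q.1, q.2))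
      = -2 * θ * ∫ q in I01 ×ˢ I01, (c (t, q.1, q.2)) ^ 2 := by
    calc (∫ q in I01 ×ˢ I01, 2 * B (t, q.1, q.2) * pdt B (t, q.1, q.2))
        = ∫ q in I01 ×ˢ I01,
            (-(jacBracket (fun q => B q * B q) ψ (t, q.1, q.2))
              - 2 * θ * jacBracket (fun q => B q * c q) ψ (t, q.1, q.2)
              - 2 * θ * (c (t, q.1, q.2)) ^ 2) := by simp only [hpt]
      _ = (∫ q in I01 ×ˢ I01,
            (-(jacBracket (fun q => B q * B q) ψ (t, q.1, q.2))
              - 2 * θ * jacBracket (fun q => B q * c q) ψ (t, q.1, q.2)))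
          - ∫ q in I01 ×ˢ I01, 2 * θ * (c (t, q.1, q.2)) ^ 2 :=
          MeasureTheory.integral_sub (i1.sub i2) i3
      _ = ((∫ q in I01 ×ˢ I01, -(jacBracket (fun q => B q * B q) ψ (t, q.1, q.2)))
            - ∫ q in I01 ×ˢ I01, 2 * θ * jacBracket (fun q => B q * c q) ψ (t, q.1, q.2))
          - ∫ q in I01 ×ˢ I01, 2 * θ * (c (t, q.1, q.2)) ^ 2 := by
          rw [MeasureTheory.integral_sub i1 i2]
      _ = -2 * θ * ∫ q in I01 ×ˢ I01, (c (t, q.1, q.2)) ^ 2 := by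
          rw [MeasureTheory.integral_neg, j1, MeasureTheory.integral_const_mul, j2,
            MeasureTheory.integral_const_mul]
          ring
  have hfin : -(θ * ∫ q in I01 ×ˢ I01, (c (t, q.1, q.2)) ^ 2)
      = (1 / 2 : ℝ) * ∫ q in I01 ×ˢ I01, 2 * B (t, q.1, q.2) * pdt B (t, q.1, q.2) := by
    rw [hval]; ring
  rw [hfin]
  exact H.const_mul (1 / 2 : ℝ)
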